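/- Let G be an abelian group whose p-component T_p(G) is finite for every prime p. If F is a full free subgroup of G (i.e., free with G/F torsion) and G/F is p-divisible for almost all primes p with T_p(G) ≠ 0, then Hom(G, T(G)) is a torsion group. -/

import Mathlib

open TensorProduct

/-- The `p`-primary component of an abelian group: elements killed by a power of `p`. -/
def pComponent (G : Type) [AddCommGroup G] (p : ℕ) : AddSubgroup G where
  carrier := {x | ∃ k : ℕ, p ^ k • x = 0}
  zero_mem' := ⟨0, smul_zero _⟩
  add_mem' := by
    rintro a b ⟨k, hk⟩ ⟨l, hl⟩
    refine ⟨k + l, ?_⟩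
    have h1 : p ^ (k + l) • a = 0 := by rw [pow_add, mul_comm, mul_smul, hk, smul_zero]
    have h2 : p ^ (k + l) • b = 0 := by rw [pow_add, mul_smul, hl, smul_zero]
    rw [smul_add, h1, h2, add_zero]
  neg_mem' := by
    rintro a ⟨k, hk⟩
    exact ⟨k, by rw [smul_neg, hk, neg_zero]⟩

/-- A full free subgroup of a group of finite torsion-free rank is finitely generated. -/
lemma full_free_finite (G : Type) [AddCommGroup G] [Module.Finite ℚ (ℚ ⊗[ℤ] G)]
    (F : AddSubgroup G) (hfree : Module.Free ℤ F) : Module.Finite ℤ F := by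
  haveI : Module.Flat ℤ ℚ := IsLocalization.flat ℚ (nonZeroDivisors ℤ)
  have hinj : Function.Injective (LinearMap.baseChange ℚ F.subtype.toIntLinearMap) := by
    rw [LinearMap.baseChange_eq_ltensor]
    exact Module.Flat.lTensor_preserves_injective_linearMap _ Subtype.coe_injective
  haveI : Module.Finite ℚ (ℚ ⊗[ℤ] F) := Module.Finite.of_injective _ hinj
  have b := Module.Free.chooseBasis ℤ F
  haveI : Finite (Module.Free.ChooseBasisIndex ℤ F) :=
    Module.Finite.finite_basis (Algebra.TensorProduct.basis ℚ b)
  exact Module.Finite.of_basis b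

/-- Let `G` be an abelian group of finite torsion-free rank whose `p`-component is finite for
every prime `p`. If `F` is a full free subgroup of `G` (free with `G/F` torsion) and `G/F` is
`p`-divisible for almost all primes `p` with `T_p(G) ≠ 0`, then `Hom(G, T(G))` is a torsion
group. -/
theorem hom_into_torsion_is_torsion (G : Type) [AddCommGroup G]
    [Module.Finite ℚ (ℚ ⊗[ℤ] G)]
    (hfin : ∀ p : ℕ, p.Prime → Finite (pComponent G p))
    (F : AddSubgroup G) (hfree : Module.Free ℤ F)
    (hfull : AddMonoid.IsTorsion (G ⧸ F))
    (hdiv : ∃ S : Finset ℕ, ∀ p : ℕ, p.Prime → p ∉ S → pComponent G p ≠ ⊥ →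
      ∀ x : G ⧸ F, ∃ y : G ⧸ F, p • y = x) :
    AddMonoid.IsTorsion (G →+ (AddCommGroup.torsion G)) := by
  classical
  obtain ⟨S, hS⟩ := hdiv
  -- the uniform multiplier coming from the exceptional set `S`
  set M : ℕ := ∏ p ∈ S.filter Nat.Prime, AddMonoid.exponent (pComponent G p) with hMdef
  have hM : M ≠ 0 := by
    rw [hMdef]
    refine Finset.prod_ne_zero_iff.mpr fun p hp => ?_
    haveI := hfin p (Finset.mem_filter.mp hp).2
    exact AddMonoid.exponent_ne_zero_of_finite
  -- every element of the (finite) `p`-component is killed by `p ^ exponent`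
  have hkill : ∀ p : ℕ, p.Prime → ∀ u : G, u ∈ pComponent G p →
      p ^ (AddMonoid.exponent (pComponent G p)) • u = 0 := by
    intro p hp u hu
    haveI := hfin p hp
    set e := AddMonoid.exponent (pComponent G p) with he_def
    have he : e ≠ 0 := AddMonoid.exponent_ne_zero_of_finite
    have h1 : e • u = 0 := by
      have h := AddMonoid.exponent_nsmul_eq_zero (⟨u, hu⟩ : pComponent G p)
      have := congrArg (Subtype.val) h
      simpa using this
    obtain ⟨k, hk⟩ := hu
    have hd1 : addOrderOf u ∣ e := addOrderOf_dvd_iff_nsmul_eq_zero.mpr h1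
    have hd2 : addOrderOf u ∣ p ^ k := addOrderOf_dvd_iff_nsmul_eq_zero.mpr hk
    obtain ⟨j, _, hord⟩ := (Nat.dvd_prime_pow hp).mp hd2
    have hje : j ≤ e := by
      have h2 : p ^ j ∣ e := hord ▸ hd1
      have h3 : p ^ j ≤ e := Nat.le_of_dvd (Nat.pos_of_ne_zero he) h2
      exact le_trans (Nat.le_of_lt (Nat.lt_pow_self hp.one_lt : j < p ^ j)) h3
    exact addOrderOf_dvd_iff_nsmul_eq_zero.mp (hord ▸ pow_dvd_pow p hje)
  -- iterated divisibility
  have hdivpow : ∀ p : ℕ, p.Prime → p ∉ S → pComponent G p ≠ ⊥ → ∀ n : ℕ,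
      ∀ x : G ⧸ F, ∃ y : G ⧸ F, p ^ n • y = x := by
    intro p hp hpS hpbot n
    induction n with
    | zero => intro x; exact ⟨x, by simp⟩
    | succ n ih =>
      intro x
      obtain ⟨y, hy⟩ := hS p hp hpS hpbot x
      obtain ⟨z, hz⟩ := ih y
      exact ⟨z, by rw [pow_succ', mul_smul, hz, hy]⟩
  -- the key prime-power case
  have key : ∀ (g : G →+ AddCommGroup.torsion G), (∀ z ∈ F, g z = 0) →
      ∀ p : ℕ, p.Prime → ∀ a : ℕ, ∀ y : G, p ^ a • y ∈ F → M • g y = 0 := by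
    intro g hg p hp a y hy
    have hpa : p ^ a • g y = 0 := by
      have h := hg _ hy
      rwa [map_nsmul] at h
    have hpa' : p ^ a • ((g y : G)) = 0 := by
      have := congrArg (Subtype.val) hpa
      simpa using this
    have hmem : ((g y : G)) ∈ pComponent G p := ⟨a, hpa'⟩
    by_cases hpS : p ∈ S
    · have hdvd : AddMonoid.exponent (pComponent G p) ∣ M :=
        Finset.dvd_prod_of_mem _ (Finset.mem_filter.mpr ⟨hpS, hp⟩)
      obtain ⟨c, hc⟩ := hdvd
      have h0 : AddMonoid.exponent (pComponent G p) • ((g y : G)) = 0 := by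
        have h := AddMonoid.exponent_nsmul_eq_zero (⟨(g y : G), hmem⟩ : pComponent G p)
        have := congrArg (Subtype.val) h
        simpa using this
      have hMg : M • ((g y : G)) = 0 := by
        rw [hc, mul_comm, mul_smul, h0, smul_zero]
      exact Subtype.ext (by simpa using hMg)
    · by_cases hbot : pComponent G p = ⊥
      · have h0 : ((g y : G)) = 0 := by
          rw [hbot] at hmem; simpa using hmem
        have : g y = 0 := Subtype.ext h0
        rw [this, smul_zero]
      · set e := AddMonoid.exponent (pComponent G p) with he_def
        obtain ⟨z, hz⟩ := hdivpow p hp hpS hbot e ((y : G ⧸ F))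
        obtain ⟨w, rfl⟩ := QuotientAddGroup.mk_surjective z
        have hzy : ((p ^ e • w : G) : G ⧸ F) = ((y : G) : G ⧸ F) := by
          rw [← hz]; exact map_nsmul (QuotientAddGroup.mk' F) _ _
        have hmemF : p ^ e • w - y ∈ F := by
          rwa [QuotientAddGroup.eq_iff_sub_mem] at hzy
        have hgy : g y = p ^ e • g w := by
          have h1 : g (p ^ e • w - y) = 0 := hg _ hmemF
          rw [map_sub, map_nsmul, sub_eq_zero] at h1
          exact h1.symm
        have hw : ((g w : G)) ∈ pComponent G p := by
          refine ⟨a + e, ?_⟩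
          have : p ^ a • (p ^ e • ((g w : G))) = 0 := by
            have : p ^ e • ((g w : G)) = ((g y : G)) := by
              rw [hgy]; push_cast; ring_nf
            rw [this, hpa']
          rwa [← mul_smul, ← pow_add] at this
        have h0 : p ^ e • ((g w : G)) = 0 := hkill p hp _ hw
        have : g y = 0 := by
          refine Subtype.ext ?_
          rw [hgy]
          push_cast
          simpa using h0
        rw [this, smul_zero]
  -- the main induction on the order of `x` modulo `F`
  have main : ∀ (g : G →+ AddCommGroup.torsion G), (∀ z ∈ F, g z = 0) →
      ∀ m : ℕ, ∀ x : G, m ≠ 0 → m • x ∈ F → M • g x = 0 := by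
    intro g hg m
    induction m using Nat.strong_induction_on with
    | _ m ih =>
      intro x hm hx
      rcases eq_or_ne m 1 with rfl | hm1
      · have : g x = 0 := hg x (by simpa using hx)
        rw [this, smul_zero]
      · set p := m.minFac with hp_def
        have hp : p.Prime := Nat.minFac_prime hm1
        set a := m.factorization p with ha_def
        set b := m / p ^ a with hb_def
        have hab : p ^ a * b = m := Nat.ordProj_mul_ordCompl_eq_self m p
        have hco : Nat.Coprime (p ^ a) b := (Nat.coprime_ordCompl hp hm).pow_left _
        have hb0 : b ≠ 0 := (Nat.ordCompl_pos p hm).ne'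
        have ha0 : a ≠ 0 := by
          have := (Nat.Prime.factorization_pos_of_dvd hp hm (Nat.minFac_dvd m))
          omega
        have hblt : b < m := by
          have hpa1 : 1 < p ^ a := Nat.one_lt_pow ha0 hp.one_lt
          calc b = 1 * b := (one_mul b).symm
            _ < p ^ a * b := (Nat.mul_lt_mul_right (Nat.pos_of_ne_zero hb0)).mpr hpa1
            _ = m := hab
        obtain ⟨u, v, huv⟩ := Nat.isCoprime_iff_coprime.mpr hco
        have hxF : ((m : ℤ)) • x ∈ F := by
          have : (m : ℤ) • x = m • x := natCast_zsmul x m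
          rw [this]; exact hx
        set y : G := v • ((b : ℤ) • x) with hy_def
        set z : G := u • (((p : ℤ) ^ a) • x) with hz_def
        have hxyz : x = z + y := by
          have h1 : (u * (p : ℤ) ^ a + v * (b : ℤ)) • x = x := by
            have : (u * (p : ℤ) ^ a + v * (b : ℤ)) = 1 := by push_cast at huv ⊢; linarith
            rw [this, one_smul]
          rw [← h1, add_smul, mul_smul, mul_smul]
        have hyF : p ^ a • y ∈ F := by
          have heq : p ^ a • y = v • ((m : ℤ) • x) := by
            calc p ^ a • y = ((p ^ a : ℕ) : ℤ) • y := (natCast_zsmul y (p ^ a)).symm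
              _ = ((((p ^ a : ℕ) : ℤ) * v) * (b : ℤ)) • x := by
                  rw [hy_def, smul_smul, smul_smul]
              _ = (v * (m : ℤ)) • x := by rw [← hab]; push_cast; ring_nf
              _ = v • ((m : ℤ) • x) := mul_smul v _ x
          rw [heq]
          exact AddSubgroup.zsmul_mem F hxF v
        have hzF : b • z ∈ F := by
          have heq : b • z = u • ((m : ℤ) • x) := by
            calc b • z = ((b : ℕ) : ℤ) • z := (natCast_zsmul z b).symm
              _ = ((((b : ℕ) : ℤ) * u) * ((p : ℤ) ^ a)) • x := by
                  rw [hz_def, smul_smul, smul_smul]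
              _ = (u * (m : ℤ)) • x := by rw [← hab]; push_cast; ring_nf
              _ = u • ((m : ℤ) • x) := mul_smul u _ x
          rw [heq]
          exact AddSubgroup.zsmul_mem F hxF u
        have h1 : M • g z = 0 := ih b hblt z hb0 hzF
        have h2 : M • g y = 0 := key g hg p hp a y hyF
        rw [hxyz, map_add, smul_add, h1, h2, add_zero]
  -- now prove every homomorphism is torsion
  intro f
  haveI : Module.Finite ℤ F := full_free_finite G F hfree
  obtain ⟨s, hs⟩ : (⊤ : Submodule ℤ F).FG := Module.Finite.fg_top
  set N : ℕ := ∏ t ∈ s, addOrderOf ((f (t : G) : G)) with hN_def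
  have hN : N ≠ 0 := by
    rw [hN_def]
    refine Finset.prod_ne_zero_iff.mpr fun t _ => ?_
    have : IsOfFinAddOrder ((f (t : G) : G)) :=
      (AddCommGroup.mem_torsion _).mp (f (t : G)).2
    exact this.addOrderOf_pos.ne'
  -- `N • f` kills `F`
  have hNf : ∀ z ∈ F, (N • f) z = 0 := by
    intro z hz
    have hzmem : (⟨z, hz⟩ : F) ∈ Submodule.span ℤ (s : Set F) := by
      rw [hs]; trivial
    have : N • f ((⟨z, hz⟩ : F) : G) = 0 := by
      refine Submodule.span_induction
        (p := fun t _ => N • f ((t : F) : G) = 0) ?_ ?_ ?_ ?_ hzmem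
      · intro t ht
        have hdvd : addOrderOf ((f (t : G) : G)) ∣ N := Finset.dvd_prod_of_mem _ ht
        have h0 : N • ((f (t : G) : G)) = 0 := addOrderOf_dvd_iff_nsmul_eq_zero.mp hdvd
        exact Subtype.ext (by simpa using h0)
      · simp
      · intro t₁ t₂ _ _ h₁ h₂
        have : ((t₁ + t₂ : F) : G) = (t₁ : G) + (t₂ : G) := rfl
        rw [this, map_add, smul_add, h₁, h₂, add_zero]
      · intro c t _ h
        have : ((c • t : F) : G) = c • (t : G) := by push_cast; ring_nf
        rw [this, map_zsmul, smul_comm, h, smul_zero]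
    simpa [AddMonoidHom.smul_apply] using this
  -- conclude
  rw [isOfFinAddOrder_iff_nsmul_eq_zero]
  refine ⟨M * N, Nat.pos_of_ne_zero (by positivity), ?_⟩
  refine AddMonoidHom.ext fun x => ?_
  obtain ⟨n, hn, hnx⟩ := isOfFinAddOrder_iff_nsmul_eq_zero.mp (hfull ((x : G ⧸ F)))
  have hnxF : n • x ∈ F := by
    rw [← QuotientAddGroup.eq_zero_iff]
    rw [← hnx]
    exact map_nsmul (QuotientAddGroup.mk' F) _ _
  have hmain := main (N • f) hNf n x hn.ne' hnxF
  simp only [AddMonoidHom.smul_apply] at hmain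
  simp only [AddMonoidHom.smul_apply, AddMonoidHom.zero_apply, mul_smul]
  exact hmain
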